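/- Let q ≥ 2 and M ≥ 1 be integers, D an M×M matrix with natural-number entries, and a = M mod q. Then 2q · Σ_{1 ≤ i < j ≤ M} D_{i,j} ≤ N(D) · (M²(q−1) − a(q−a)), where N(D) is the least length r for which there exist vectors p_1, …, p_M in F_q^r with d(p_i, p_j) ≥ D_{i,j} for all i, j. Equivalently, N(D) ≥ 2q (Σ_{i<j} D_{i,j}) / (M²(q−1) − a(q−a)). -/
import Mathlib

open Finset


/-- `N(D)`: the least length `r` for which a `D`-code of length `r` over `F` exists. -/
noncomputable def Nmat (F : Type*) [Fintype F] [DecidableEq F] {M : ℕ}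
    (D : Fin M → Fin M → ℕ) : ℕ :=
  sInf {r : ℕ | ∃ p : Fin M → Fin r → F, ∀ i j, D i j ≤ hammingDist (p i) (p j)}

lemma consec_nonneg (k : ℤ) : 0 ≤ k * (k - 1) := by
  rcases le_or_gt k 0 with h | h
  · nlinarith
  · exact mul_nonneg (by linarith) (by omega)

lemma sq_sum_lower {q M a m : ℕ} (hq : 1 ≤ q) (ha : a = M % q) (hm : m = M / q)
    (n : Fin q → ℕ) (hsum : ∑ s, n s = M) :
    (M : ℤ)^2 + a * (q - a) ≤ q * ∑ s, (n s : ℤ)^2 := by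
  have key : ∀ s : Fin q, (2*(m:ℤ)+1) * n s ≤ (n s : ℤ)^2 + m*(m+1) := by
    intro s
    have h := consec_nonneg ((n s : ℤ) - m)
    nlinarith [h]
  have hsum2 : (2*(m:ℤ)+1) * M ≤ (∑ s, (n s : ℤ)^2) + q * (m*(m+1)) := by
    have h2 := Finset.sum_le_sum (s := (univ : Finset (Fin q))) (fun s _ => key s)
    rw [← Finset.mul_sum] at h2
    have hc : (∑ s, (n s : ℤ)) = (M : ℤ) := by
      rw [← Nat.cast_sum, hsum]
    rw [hc] at h2
    simpa [Finset.sum_add_distrib, Finset.card_univ, mul_comm] using h2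
  have hMa : (M : ℤ) = q * m + a := by
    have h : M = q * m + a := by subst ha hm; exact (Nat.div_add_mod M q).symm
    exact_mod_cast h
  have hq' : (0:ℤ) ≤ q := by positivity
  have h3 := mul_le_mul_of_nonneg_left hsum2 hq'
  nlinarith [h3]

lemma count_sq {M q : ℕ} (f : Fin M → Fin q) :
    ∑ i : Fin M, ∑ j : Fin M, (if f i = f j then 1 else 0) =
      ∑ s : Fin q, ((univ.filter (fun i => f i = s)).card)^2 := by
  have h1 : ∀ i : Fin M, ∑ j : Fin M, (if f i = f j then 1 else 0)
      = (univ.filter (fun j => f j = f i)).card := by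
    intro i
    rw [card_filter]
    exact Finset.sum_congr rfl fun j _ => by simp [eq_comm]
  simp_rw [h1]
  rw [← Finset.sum_fiberwise univ f (fun i => (univ.filter (fun j => f j = f i)).card)]
  refine Finset.sum_congr rfl fun s _ => ?_
  have heq : ∀ i ∈ univ.filter (fun i => f i = s),
      (univ.filter (fun j => f j = f i)).card = (univ.filter (fun j => f j = s)).card := by
    intro i hi
    simp only [mem_filter] at hi
    rw [hi.2]
  rw [Finset.sum_congr rfl heq, Finset.sum_const, smul_eq_mul, sq]

lemma col_bound {M q a : ℕ} (hq : 2 ≤ q) (ha : a = M % q) (f : Fin M → Fin q) :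
    q * (∑ i : Fin M, ∑ j : Fin M, if f i ≠ f j then 1 else 0) ≤
      M ^ 2 * (q - 1) - a * (q - a) := by
  have hq1 : 1 ≤ q := by omega
  have haq : a ≤ q := by subst ha; exact (Nat.mod_lt M (by omega)).le
  set n : Fin q → ℕ := fun s => (univ.filter (fun i => f i = s)).card with hn
  have hsum : ∑ s, n s = M := by
    have h := Finset.card_eq_sum_card_fiberwise
      (s := (univ : Finset (Fin M))) (t := (univ : Finset (Fin q))) (f := f)
      (fun i _ => mem_univ (f i))
    simp only [Finset.card_univ, Fintype.card_fin] at h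
    exact h.symm
  set U : ℕ := ∑ i : Fin M, ∑ j : Fin M, if f i ≠ f j then 1 else 0 with hU
  set S : ℕ := ∑ s, (n s)^2 with hS
  have h2 : S = ∑ i : Fin M, ∑ j : Fin M, if f i = f j then 1 else 0 :=
    (count_sq f).symm
  have hUS : U + S = M^2 := by
    have hcong : ∀ i : Fin M,
        ((∑ j : Fin M, if f i ≠ f j then 1 else 0)
          + ∑ j : Fin M, if f i = f j then 1 else 0) = M := by
      intro i
      rw [← Finset.sum_add_distrib]
      have hone : ∀ j : Fin M,
          ((if f i ≠ f j then 1 else 0) + (if f i = f j then 1 else 0)) = 1 := by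
        intro j; by_cases h : f i = f j <;> simp [h]
      simp_rw [hone]
      simp
    calc U + S
        = ∑ i : Fin M, ((∑ j : Fin M, if f i ≠ f j then 1 else 0)
            + ∑ j : Fin M, if f i = f j then 1 else 0) := by
          rw [hU, h2, ← Finset.sum_add_distrib]
      _ = ∑ _i : Fin M, M := Finset.sum_congr rfl fun i _ => hcong i
      _ = M ^ 2 := by simp [sq, Finset.card_univ]
  have hlow := sq_sum_lower hq1 ha rfl n hsum
  have hScast : (S:ℤ) = ∑ s, (n s : ℤ)^2 := by rw [hS]; push_cast; rfl
  rw [← hScast] at hlow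
  have hgoal : q * U + a * (q - a) ≤ M ^ 2 * (q - 1) := by
    zify [haq, hq1]
    have hUSz : (U:ℤ) + S = (M:ℤ)^2 := by exact_mod_cast hUS
    have hqU : (q:ℤ) * U = q * M^2 - q * S := by
      rw [show (U:ℤ) = (M:ℤ)^2 - S by linarith]; ring
    linarith
  exact Nat.le_sub_of_add_le hgoal

/-- **generalized Plotkin bound for irregular-distance codes.**
For a `q`-ary alphabet (`q ≥ 2`), `M ≥ 1`, a matrix `D` admitting a `D`-code, and
`a = M mod q`, we have `2q · Σ_{i<j} D_{i,j} ≤ N(D) · (M²(q−1) − a(q−a))`. -/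
theorem plotkin_bound_Dcode
    {q M : ℕ} (hq : 2 ≤ q) (hM : 1 ≤ M)
    (D : Fin M → Fin M → ℕ) (a : ℕ) (ha : a = M % q)
    (hex : ∃ r : ℕ, ∃ p : Fin M → Fin r → Fin q,
      ∀ i j, D i j ≤ hammingDist (p i) (p j)) :
    2 * q * (∑ i : Fin M, ∑ j : Fin M, if i < j then D i j else 0) ≤
      Nmat (Fin q) D * (M ^ 2 * (q - 1) - a * (q - a)) := by
  obtain ⟨p, hp⟩ : ∃ p : Fin M → Fin (Nmat (Fin q) D) → Fin q,
      ∀ i j, D i j ≤ hammingDist (p i) (p j) := Nat.sInf_mem hex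
  have hham : ∀ i j : Fin M, hammingDist (p i) (p j)
      = ∑ k : Fin (Nmat (Fin q) D), if p i k ≠ p j k then 1 else 0 := by
    intro i j; rw [hammingDist, Finset.card_filter]
  have htotal : ∑ i : Fin M, ∑ j : Fin M, hammingDist (p i) (p j)
      = ∑ k : Fin (Nmat (Fin q) D), ∑ i : Fin M, ∑ j : Fin M, if p i k ≠ p j k then 1 else 0 := by
    simp_rw [hham]
    exact (Finset.sum_congr rfl fun i _ => Finset.sum_comm).trans Finset.sum_comm
  have hcols : q * (∑ i : Fin M, ∑ j : Fin M, hammingDist (p i) (p j)) ≤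
      Nmat (Fin q) D * (M ^ 2 * (q - 1) - a * (q - a)) := by
    rw [htotal, Finset.mul_sum]
    calc ∑ k : Fin (Nmat (Fin q) D), q * (∑ i : Fin M, ∑ j : Fin M, if p i k ≠ p j k then 1 else 0)
        ≤ ∑ _k : Fin (Nmat (Fin q) D), (M ^ 2 * (q - 1) - a * (q - a)) :=
          Finset.sum_le_sum fun k _ => col_bound hq ha (fun i => p i k)
      _ = Nmat (Fin q) D * (M ^ 2 * (q - 1) - a * (q - a)) := by
          simp [Finset.card_univ]
  have hsym : 2 * (∑ i : Fin M, ∑ j : Fin M, if i < j then D i j else 0)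
      ≤ ∑ i : Fin M, ∑ j : Fin M, hammingDist (p i) (p j) := by
    have hstep : ∀ i j : Fin M,
        (if i < j then D i j else 0) + (if j < i then D j i else 0)
          ≤ hammingDist (p i) (p j) := by
      intro i j
      rcases lt_trichotomy i j with h | h | h
      · rw [if_pos h, if_neg (asymm h), add_zero]; exact hp i j
      · subst h; simp
      · rw [if_neg (asymm h), if_pos h, zero_add]
        exact (hp j i).trans (le_of_eq (hammingDist_comm _ _))
    calc 2 * (∑ i : Fin M, ∑ j : Fin M, if i < j then D i j else 0)
        = (∑ i : Fin M, ∑ j : Fin M, if i < j then D i j else 0)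
          + (∑ i : Fin M, ∑ j : Fin M, if j < i then D j i else 0) := by
          rw [two_mul]
          congr 1
          rw [Finset.sum_comm]
      _ = ∑ i : Fin M, ∑ j : Fin M,
            ((if i < j then D i j else 0) + (if j < i then D j i else 0)) := by
          rw [← Finset.sum_add_distrib]
          exact Finset.sum_congr rfl fun i _ => (Finset.sum_add_distrib).symm
      _ ≤ ∑ i : Fin M, ∑ j : Fin M, hammingDist (p i) (p j) :=
          Finset.sum_le_sum fun i _ => Finset.sum_le_sum fun j _ => hstep i j
  calc 2 * q * (∑ i : Fin M, ∑ j : Fin M, if i < j then D i j else 0)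
      = q * (2 * ∑ i : Fin M, ∑ j : Fin M, if i < j then D i j else 0) := by ring
    _ ≤ q * (∑ i : Fin M, ∑ j : Fin M, hammingDist (p i) (p j)) :=
        Nat.mul_le_mul_left q hsym
    _ ≤ Nmat (Fin q) D * (M ^ 2 * (q - 1) - a * (q - a)) := hcols
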